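/- Let (S, (φ_s), (η^s)) be a feasible family attaining the supremum of the single-type problem, let s ∈ S have φ_s > 0 and η^s ∈ P_a, and write η^s = Σ_{i∈T} q_i·i where T is a set of extreme points of P_a and q_i > 0 for all i ∈ T with Σ_{i∈T} q_i = 1. Then the planar points {(R(i), C(i)) : i ∈ T} lie on a common line with nonpositive slope; that is, either R(i) = R(j) for all i, j ∈ T, or there exist real numbers k ≤ 0 and b with C(i) = k·R(i) + b for every i ∈ T. -/

import Mathlib

open Finset
open scoped Classical

noncomputable section

/-- The probability simplex in `ℝ^n`. -/
def simplex (n : ℕ) : Set (Fin n → ℝ) :=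
  {η | (∀ ω, 0 ≤ η ω) ∧ ∑ ω, η ω = 1}

variable {n : ℕ} {A : Type*} [Fintype A] [Nonempty A]

/-- `u*(ω) = max_{a ∈ A} u(ω, a)`. -/
def uStar (u : Fin n → A → ℝ) (ω : Fin n) : ℝ :=
  Finset.univ.sup' Finset.univ_nonempty (u ω)

/-- `C_a(η) = Σ_ω η_ω (u*(ω) − u(ω,a))`, the expected regret of action `a`. -/
def Ca (u : Fin n → A → ℝ) (a : A) (η : Fin n → ℝ) : ℝ :=
  ∑ ω, η ω * (uStar u ω - u ω a)

/-- The cost of uncertainty `C(η) = min_a C_a(η)`. -/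
def Cost (u : Fin n → A → ℝ) (η : Fin n → ℝ) : ℝ :=
  Finset.univ.inf' Finset.univ_nonempty (fun a => Ca u a η)

/-- `P_a`: the polytope of beliefs under which `a` is a best action. -/
def Pa (u : Fin n → A → ℝ) (a : A) : Set (Fin n → ℝ) :=
  {η | η ∈ simplex n ∧ ∀ a' : A, Ca u a η ≤ Ca u a' η}

/-- The likelihood ratio `R(η) = Σ_ω μ_ω η_ω / θ_ω`. -/
def Ratio (μ θ η : Fin n → ℝ) : ℝ := ∑ ω, μ ω * η ω / θ ω

/-- The set of feasible objective values of the single-type problem. -/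
def ConcaveSet (u : Fin n → A → ℝ) (μ θ : Fin n → ℝ) : Set ℝ :=
  {v | ∃ (m : ℕ) (φ : Fin m → ℝ) (η : Fin m → Fin n → ℝ),
    (∀ s, 0 ≤ φ s) ∧ (∀ s, η s ∈ simplex n) ∧
    (∀ ω, ∑ s, φ s * η s ω = θ ω) ∧
    v = ∑ s, φ s * Ratio μ θ (η s) * Cost u (η s)}


lemma ca_nonneg (u : Fin n → A → ℝ) (a : A) {η : Fin n → ℝ} (hη : ∀ ω, 0 ≤ η ω) :
    0 ≤ Ca u a η :=
  Finset.sum_nonneg fun ω _ => mul_nonneg (hη ω)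
    (sub_nonneg.2 (Finset.le_sup' (u ω) (Finset.mem_univ a)))

lemma cost_le_ca (u : Fin n → A → ℝ) (a : A) (η : Fin n → ℝ) : Cost u η ≤ Ca u a η :=
  Finset.inf'_le _ (Finset.mem_univ a)

lemma cost_nonneg (u : Fin n → A → ℝ) {η : Fin n → ℝ} (hη : ∀ ω, 0 ≤ η ω) :
    0 ≤ Cost u η :=
  Finset.le_inf' _ _ fun a _ => ca_nonneg u a hη

lemma cost_eq_ca {u : Fin n → A → ℝ} {a : A} {η : Fin n → ℝ} (hη : η ∈ Pa u a) :
    Cost u η = Ca u a η :=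
  le_antisymm (cost_le_ca u a η) (Finset.le_inf' _ _ fun a' _ => hη.2 a')

lemma ca_sum (u : Fin n → A → ℝ) (a : A) (T : Finset (Fin n → ℝ)) (c : (Fin n → ℝ) → ℝ) :
    Ca u a (fun ω => ∑ k ∈ T, c k * k ω) = ∑ k ∈ T, c k * Ca u a k := by
  simp only [Ca, Finset.sum_mul, Finset.mul_sum]
  rw [Finset.sum_comm]
  exact Finset.sum_congr rfl fun k _ => Finset.sum_congr rfl fun ω _ => by ring

lemma ratio_sum (μ θ : Fin n → ℝ) (T : Finset (Fin n → ℝ)) (c : (Fin n → ℝ) → ℝ) :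
    Ratio μ θ (fun ω => ∑ k ∈ T, c k * k ω) = ∑ k ∈ T, c k * Ratio μ θ k := by
  simp only [Ratio, Finset.mul_sum, Finset.sum_div]
  rw [Finset.sum_comm]
  exact Finset.sum_congr rfl fun k _ => Finset.sum_congr rfl fun ω _ => by ring

lemma ca_add (u : Fin n → A → ℝ) (a : A) (x y : Fin n → ℝ) :
    Ca u a (fun ω => x ω + y ω) = Ca u a x + Ca u a y := by
  simp only [Ca, add_mul, Finset.sum_add_distrib]

lemma ca_sub (u : Fin n → A → ℝ) (a : A) (x y : Fin n → ℝ) :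
    Ca u a (fun ω => x ω - y ω) = Ca u a x - Ca u a y := by
  simp only [Ca, sub_mul, Finset.sum_sub_distrib]

lemma ratio_add (μ θ x y : Fin n → ℝ) :
    Ratio μ θ (fun ω => x ω + y ω) = Ratio μ θ x + Ratio μ θ y := by
  simp only [Ratio, mul_add, add_div, Finset.sum_add_distrib]

lemma ratio_sub (μ θ x y : Fin n → ℝ) :
    Ratio μ θ (fun ω => x ω - y ω) = Ratio μ θ x - Ratio μ θ y := by
  simp only [Ratio, mul_sub, sub_div, Finset.sum_sub_distrib]

lemma ratio_nonneg {μ θ η : Fin n → ℝ} (hμ : ∀ ω, 0 ≤ μ ω) (hθ : ∀ ω, 0 < θ ω)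
    (hη : ∀ ω, 0 ≤ η ω) : 0 ≤ Ratio μ θ η :=
  Finset.sum_nonneg fun ω _ => div_nonneg (mul_nonneg (hμ ω) (hη ω)) (hθ ω).le

lemma comb_mem_Pa {u : Fin n → A → ℝ} {a : A} {T : Finset (Fin n → ℝ)}
    (hT : ∀ k ∈ T, k ∈ Pa u a) {c : (Fin n → ℝ) → ℝ} (hc : ∀ k ∈ T, 0 ≤ c k)
    (hcs : ∑ k ∈ T, c k = 1) : (fun ω => ∑ k ∈ T, c k * k ω) ∈ Pa u a := by
  refine ⟨⟨fun ω => Finset.sum_nonneg fun k hk => mul_nonneg (hc k hk) ((hT k hk).1.1 ω), ?_⟩, ?_⟩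
  · rw [Finset.sum_comm]
    calc ∑ k ∈ T, ∑ ω, c k * k ω = ∑ k ∈ T, c k := by
          refine Finset.sum_congr rfl fun k hk => ?_
          rw [← Finset.mul_sum, (hT k hk).1.2, mul_one]
      _ = 1 := hcs
  · intro a'
    rw [ca_sum, ca_sum]
    exact Finset.sum_le_sum fun k hk => mul_le_mul_of_nonneg_left ((hT k hk).2 a') (hc k hk)

lemma bddAbove_concaveSet (hn : 1 ≤ n) (u : Fin n → A → ℝ) {μ θ : Fin n → ℝ}
    (hμ : μ ∈ simplex n) (hθ : θ ∈ simplex n) (hθpos : ∀ ω, 0 < θ ω) :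
    BddAbove (ConcaveSet u μ θ) := by
  have hne : Nonempty (Fin n) := Fin.pos_iff_nonempty.mp hn
  obtain ⟨a0⟩ := ‹Nonempty A›
  set B := Finset.univ.sup' Finset.univ_nonempty (fun ω => uStar u ω - u ω a0) with hB
  set Rm := Finset.univ.sup' Finset.univ_nonempty (fun ω => μ ω / θ ω) with hRm
  have hB0 : 0 ≤ B := by
    obtain ⟨ω0⟩ := hne
    exact le_trans (sub_nonneg.2 (Finset.le_sup' (u ω0) (Finset.mem_univ a0)))
      (Finset.le_sup' (fun ω => uStar u ω - u ω a0) (Finset.mem_univ ω0))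
  have hRm0 : 0 ≤ Rm := by
    obtain ⟨ω0⟩ := hne
    exact le_trans (div_nonneg (hμ.1 ω0) (hθpos ω0).le)
      (Finset.le_sup' (fun ω => μ ω / θ ω) (Finset.mem_univ ω0))
  refine ⟨Rm * B, ?_⟩
  rintro v ⟨m, φ, η, hφ, hη, hfeas, rfl⟩
  have hφsum : ∑ s, φ s = 1 := by
    calc ∑ s, φ s = ∑ s, ∑ ω, φ s * η s ω := by
          refine Finset.sum_congr rfl fun s _ => ?_
          rw [← Finset.mul_sum, (hη s).2, mul_one]
      _ = ∑ ω, ∑ s, φ s * η s ω := Finset.sum_comm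
      _ = ∑ ω, θ ω := by simp [hfeas]
      _ = 1 := hθ.2
  calc ∑ s, φ s * Ratio μ θ (η s) * Cost u (η s) ≤ ∑ s, φ s * (Rm * B) := by
        refine Finset.sum_le_sum fun s _ => ?_
        rw [mul_assoc]
        refine mul_le_mul_of_nonneg_left ?_ (hφ s)
        have hRle : Ratio μ θ (η s) ≤ Rm := by
          calc Ratio μ θ (η s) = ∑ ω, η s ω * (μ ω / θ ω) := by
                refine Finset.sum_congr rfl fun ω _ => by ring
            _ ≤ ∑ ω, η s ω * Rm := Finset.sum_le_sum fun ω _ =>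
                mul_le_mul_of_nonneg_left
                  (Finset.le_sup' (fun ω => μ ω / θ ω) (Finset.mem_univ ω)) ((hη s).1 ω)
            _ = Rm := by rw [← Finset.sum_mul, (hη s).2, one_mul]
        have hCle : Cost u (η s) ≤ B := by
          refine le_trans (cost_le_ca u a0 (η s)) ?_
          calc Ca u a0 (η s) ≤ ∑ ω, η s ω * B := Finset.sum_le_sum fun ω _ =>
                mul_le_mul_of_nonneg_left
                  (Finset.le_sup' (fun ω => uStar u ω - u ω a0) (Finset.mem_univ ω)) ((hη s).1 ω)
            _ = B := by rw [← Finset.sum_mul, (hη s).2, one_mul]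
        exact mul_le_mul hRle hCle (cost_nonneg u (hη s).1) hRm0
    _ = Rm * B := by rw [← Finset.sum_mul, hφsum, one_mul]
lemma perturb (hn : 1 ≤ n) (u : Fin n → A → ℝ)
    (μ θ : Fin n → ℝ) (hμ : μ ∈ simplex n) (hθ : θ ∈ simplex n) (hθpos : ∀ ω, 0 < θ ω)
    (m : ℕ) (φ : Fin m → ℝ) (η : Fin m → Fin n → ℝ)
    (hφ : ∀ s, 0 ≤ φ s) (hη : ∀ s, η s ∈ simplex n)
    (hfeas : ∀ ω, ∑ s, φ s * η s ω = θ ω)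
    (hopt : (∑ s, φ s * Ratio μ θ (η s) * Cost u (η s)) = sSup (ConcaveSet u μ θ))
    (s : Fin m) (hφs : 0 < φ s) (a : A) (hηs : η s ∈ Pa u a)
    (T : Finset (Fin n → ℝ)) (hTP : ∀ k ∈ T, k ∈ Pa u a)
    (q : (Fin n → ℝ) → ℝ) (hq : ∀ i ∈ T, 0 < q i) (hqsum : ∑ i ∈ T, q i = 1)
    (hcomb : ∀ ω, ∑ i ∈ T, q i * i ω = η s ω)
    (w : (Fin n → ℝ) → ℝ) (hw : ∑ k ∈ T, w k = 0) :
    (∑ k ∈ T, w k * Ratio μ θ k) * (∑ k ∈ T, w k * Ca u a k) ≤ 0 := by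
  have hTne : T.Nonempty := by
    rcases T.eq_empty_or_nonempty with h | h
    · exfalso; rw [h] at hqsum; simp at hqsum
    · exact h
  -- choose ε
  set ε := T.inf' hTne (fun k => q k / (|w k| + 1)) with hε
  have hεpos : 0 < ε := by
    rw [hε, Finset.lt_inf'_iff]
    intro k hk
    exact div_pos (hq k hk) (by positivity)
  have hεw : ∀ k ∈ T, ε * |w k| ≤ q k := by
    intro k hk
    have h1 : ε ≤ q k / (|w k| + 1) := Finset.inf'_le _ hk
    have h2 : ε * (|w k| + 1) ≤ q k := by
      rw [← le_div_iff₀ (by positivity)]; exact h1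
    nlinarith [abs_nonneg (w k), hεpos]
  -- perturbed posteriors
  set v : Fin n → ℝ := fun ω => ∑ k ∈ T, (ε * w k) * k ω with hv
  set ηp : Fin n → ℝ := fun ω => η s ω + v ω with hηpdef
  set ηm : Fin n → ℝ := fun ω => η s ω - v ω with hηmdef
  have hηprep : ηp = fun ω => ∑ k ∈ T, (q k + ε * w k) * k ω := by
    funext ω
    simp only [hηpdef, hv, ← hcomb ω, ← Finset.sum_add_distrib, add_mul]
  have hηmrep : ηm = fun ω => ∑ k ∈ T, (q k - ε * w k) * k ω := by
    funext ω
    simp only [hηmdef, hv, ← hcomb ω, ← Finset.sum_sub_distrib, sub_mul]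
  have hwsum : ∑ k ∈ T, ε * w k = 0 := by rw [← Finset.mul_sum, hw, mul_zero]
  have hηpPa : ηp ∈ Pa u a := by
    rw [hηprep]
    refine comb_mem_Pa hTP (fun k hk => ?_) (by rw [Finset.sum_add_distrib, hqsum, hwsum]; ring)
    have := hεw k hk
    have := neg_abs_le (w k)
    nlinarith [hεpos]
  have hηmPa : ηm ∈ Pa u a := by
    rw [hηmrep]
    refine comb_mem_Pa hTP (fun k hk => ?_) (by rw [Finset.sum_sub_distrib, hqsum, hwsum]; ring)
    have := hεw k hk
    have := le_abs_self (w k)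
    nlinarith [hεpos]
  -- linear values
  set W : ℝ := ∑ k ∈ T, w k * Ratio μ θ k with hW
  set Wc : ℝ := ∑ k ∈ T, w k * Ca u a k with hWc
  have hRv : Ratio μ θ v = ε * W := by
    rw [hv, ratio_sum, hW, Finset.mul_sum]
    exact Finset.sum_congr rfl fun k _ => by ring
  have hCv : Ca u a v = ε * Wc := by
    rw [hv, ca_sum, hWc, Finset.mul_sum]
    exact Finset.sum_congr rfl fun k _ => by ring
  set R0 : ℝ := Ratio μ θ (η s) with hR0
  set C0 : ℝ := Ca u a (η s) with hC0
  have hRp : Ratio μ θ ηp = R0 + ε * W := by rw [hηpdef, ratio_add, hRv]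
  have hRm2 : Ratio μ θ ηm = R0 - ε * W := by rw [hηmdef, ratio_sub, hRv]
  have hCp : Cost u ηp = C0 + ε * Wc := by rw [cost_eq_ca hηpPa, hηpdef, ca_add, hCv]
  have hCm : Cost u ηm = C0 - ε * Wc := by rw [cost_eq_ca hηmPa, hηmdef, ca_sub, hCv]
  have hCs : Cost u (η s) = C0 := cost_eq_ca hηs
  -- perturbed family
  set φ' : Fin (m + 1) → ℝ := Fin.snoc (Function.update φ s (φ s / 2)) (φ s / 2) with hφ'
  set η' : Fin (m + 1) → Fin n → ℝ := Fin.snoc (Function.update η s ηp) ηm with hη'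
  have hφ'nn : ∀ t, 0 ≤ φ' t := by
    intro t
    refine Fin.lastCases ?_ (fun t => ?_) t
    · rw [hφ', Fin.snoc_last]; linarith
    · rw [hφ', Fin.snoc_castSucc]
      by_cases ht : t = s
      · subst ht; rw [Function.update_self]; linarith
      · rw [Function.update_of_ne ht]; exact hφ t
  have hη'mem : ∀ t, η' t ∈ simplex n := by
    intro t
    refine Fin.lastCases ?_ (fun t => ?_) t
    · simp only [hη', Fin.snoc_last]; exact hηmPa.1
    · simp only [hη', Fin.snoc_castSucc]
      by_cases ht : t = s
      · subst ht; simp only [Function.update_self]; exact hηpPa.1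
      · rw [Function.update_of_ne ht]; exact hη t
  have hsplit : ∀ f : Fin m → ℝ, ∑ t, f t = ∑ t ∈ Finset.univ \ {s}, f t + f s := by
    intro f
    rw [Finset.sum_eq_sum_sdiff_singleton_add (Finset.mem_univ s)]
  have hsnocsum : ∀ g : (Fin n → ℝ) → ℝ → ℝ,
      ∑ t : Fin (m + 1), g (η' t) (φ' t)
        = ∑ t ∈ Finset.univ \ {s}, g (η t) (φ t) + g ηp (φ s / 2) + g ηm (φ s / 2) := by
    intro g
    rw [Fin.sum_univ_castSucc]
    simp only [hφ', hη', Fin.snoc_castSucc, Fin.snoc_last]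
    rw [hsplit (fun t => g (Function.update η s ηp t) (Function.update φ s (φ s / 2) t))]
    simp only [Function.update_self]
    congr 1
    congr 1
    refine Finset.sum_congr rfl fun t ht => ?_
    have ht' : t ≠ s := by simpa using (Finset.mem_sdiff.mp ht).2
    rw [Function.update_of_ne ht', Function.update_of_ne ht']
  have hfeas' : ∀ ω, ∑ t, φ' t * η' t ω = θ ω := by
    intro ω
    have := hsnocsum (fun x c => c * x ω)
    rw [this, ← hfeas ω, hsplit (fun t => φ t * η t ω)]
    simp only [hηpdef, hηmdef]
    ring
  have hmem : (∑ t, φ' t * Ratio μ θ (η' t) * Cost u (η' t)) ∈ ConcaveSet u μ θ :=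
    ⟨m + 1, φ', η', hφ'nn, hη'mem, hfeas', rfl⟩
  have hle : (∑ t, φ' t * Ratio μ θ (η' t) * Cost u (η' t))
      ≤ ∑ t, φ t * Ratio μ θ (η t) * Cost u (η t) := by
    rw [hopt]
    exact le_csSup (bddAbove_concaveSet hn u hμ hθ hθpos) hmem
  have hval' : ∑ t, φ' t * Ratio μ θ (η' t) * Cost u (η' t)
      = ∑ t ∈ Finset.univ \ {s}, φ t * Ratio μ θ (η t) * Cost u (η t)
        + (φ s / 2) * (R0 + ε * W) * (C0 + ε * Wc)
        + (φ s / 2) * (R0 - ε * W) * (C0 - ε * Wc) := by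
    rw [hsnocsum (fun x c => c * Ratio μ θ x * Cost u x), hRp, hCp, hRm2, hCm]
  have hval : ∑ t, φ t * Ratio μ θ (η t) * Cost u (η t)
      = ∑ t ∈ Finset.univ \ {s}, φ t * Ratio μ θ (η t) * Cost u (η t)
        + φ s * R0 * C0 := by
    rw [hsplit (fun t => φ t * Ratio μ θ (η t) * Cost u (η t)), hCs]
  rw [hval', hval] at hle
  have hkey : φ s * (ε * W * (ε * Wc)) ≤ 0 := by nlinarith
  nlinarith [mul_pos (mul_pos hφs hεpos) hεpos]

/-- in a feasible family attaining the supremum of the single-type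
problem, if a positively weighted posterior `η^s ∈ P_a` is a convex combination with
strictly positive coefficients of a set `T` of extreme points of `P_a`, then the
planar points `{(R(i), C(i)) : i ∈ T}` lie on a common line with nonpositive slope. -/
theorem stmt7 (hn : 1 ≤ n) (u : Fin n → A → ℝ)
    (μ θ : Fin n → ℝ) (hμ : μ ∈ simplex n) (hθ : θ ∈ simplex n)
    (hθpos : ∀ ω, 0 < θ ω)
    (m : ℕ) (φ : Fin m → ℝ) (η : Fin m → Fin n → ℝ)
    (hφ : ∀ s, 0 ≤ φ s) (hη : ∀ s, η s ∈ simplex n)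
    (hfeas : ∀ ω, ∑ s, φ s * η s ω = θ ω)
    (hopt : (∑ s, φ s * Ratio μ θ (η s) * Cost u (η s)) = sSup (ConcaveSet u μ θ))
    (s : Fin m) (hφs : 0 < φ s) (a : A) (hηs : η s ∈ Pa u a)
    (T : Finset (Fin n → ℝ)) (hT : ↑T ⊆ Set.extremePoints ℝ (Pa u a))
    (q : (Fin n → ℝ) → ℝ) (hq : ∀ i ∈ T, 0 < q i) (hqsum : ∑ i ∈ T, q i = 1)
    (hcomb : ∀ ω, ∑ i ∈ T, q i * i ω = η s ω) :
    (∀ i ∈ T, ∀ j ∈ T, Ratio μ θ i = Ratio μ θ j) ∨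
    (∃ k b : ℝ, k ≤ 0 ∧ ∀ i ∈ T, Cost u i = k * Ratio μ θ i + b) := by
  have hTP : ∀ k ∈ T, k ∈ Pa u a := fun k hk => (hT hk).1
  have key : ∀ i0 ∈ T, ∀ i ∈ T, ∀ j ∈ T, ∀ α β : ℝ,
      (α * (Ratio μ θ i - Ratio μ θ i0) + β * (Ratio μ θ j - Ratio μ θ i0)) *
        (α * (Ca u a i - Ca u a i0) + β * (Ca u a j - Ca u a i0)) ≤ 0 := by
    intro i0 hi0 i hi j hj α β
    set w : (Fin n → ℝ) → ℝ := fun p =>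
      α * ((if p = i then (1:ℝ) else 0) - (if p = i0 then 1 else 0)) +
        β * ((if p = j then (1:ℝ) else 0) - (if p = i0 then 1 else 0)) with hwdef
    have hdelta : ∀ (p : Fin n → ℝ), p ∈ T → ∀ X : (Fin n → ℝ) → ℝ,
        ∑ k ∈ T, (if k = p then (1:ℝ) else 0) * X k = X p := by
      intro p hp X
      have hcongr : ∀ k ∈ T, (if k = p then (1:ℝ) else 0) * X k
          = if k = p then X k else 0 := fun k _ => by split <;> simp
      rw [Finset.sum_congr rfl hcongr, Finset.sum_ite_eq' T p X, if_pos hp]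
    have hsum : ∀ X : (Fin n → ℝ) → ℝ,
        ∑ k ∈ T, w k * X k = α * (X i - X i0) + β * (X j - X i0) := by
      intro X
      have hterm : ∀ k ∈ T, w k * X k =
          (α * ((if k = i then (1:ℝ) else 0) * X k)
            - α * ((if k = i0 then (1:ℝ) else 0) * X k))
          + (β * ((if k = j then (1:ℝ) else 0) * X k)
            - β * ((if k = i0 then (1:ℝ) else 0) * X k)) := by
        intro k _; rw [hwdef]; ring
      rw [Finset.sum_congr rfl hterm, Finset.sum_add_distrib, Finset.sum_sub_distrib,
        Finset.sum_sub_distrib, ← Finset.mul_sum, ← Finset.mul_sum, ← Finset.mul_sum,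
        ← Finset.mul_sum, hdelta i hi X, hdelta i0 hi0 X, hdelta j hj X]
      ring
    have hw : ∑ k ∈ T, w k = 0 := by
      have h1 := hsum (fun _ => 1)
      simp only [mul_one, sub_self, mul_zero, add_zero] at h1
      exact h1
    have h := perturb hn u μ θ hμ hθ hθpos m φ η hφ hη hfeas hopt s hφs a hηs T hTP
      q hq hqsum hcomb w hw
    rwa [hsum (Ratio μ θ), hsum (Ca u a)] at h
  by_cases hRall : ∀ i ∈ T, ∀ j ∈ T, Ratio μ θ i = Ratio μ θ j
  · exact Or.inl hRall
  right
  push_neg at hRall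
  obtain ⟨i0, hi0, i1, hi1, hRne⟩ := hRall
  have hr1 : Ratio μ θ i1 - Ratio μ θ i0 ≠ 0 := sub_ne_zero.2 (Ne.symm hRne)
  set k : ℝ := (Ca u a i1 - Ca u a i0) / (Ratio μ θ i1 - Ratio μ θ i0) with hkdef
  have hc1 : Ca u a i1 - Ca u a i0 = k * (Ratio μ θ i1 - Ratio μ θ i0) := by
    rw [hkdef]; field_simp
  have hk0 : k ≤ 0 := by
    have h := key i0 hi0 i1 hi1 i1 hi1 1 0
    simp only [one_mul, zero_mul, add_zero] at h
    rw [hc1] at h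
    nlinarith [mul_self_pos.mpr hr1]
  refine ⟨k, Ca u a i0 - k * Ratio μ θ i0, hk0, ?_⟩
  intro j hj
  rw [cost_eq_ca (hTP j hj)]
  by_contra hne2
  have hcj : Ca u a j - Ca u a i0 ≠ k * (Ratio μ θ j - Ratio μ θ i0) := by
    intro hco; apply hne2; linear_combination hco
  have hD : (Ca u a j - Ca u a i0) - k * (Ratio μ θ j - Ratio μ θ i0) ≠ 0 :=
    sub_ne_zero.2 hcj
  set r1 : ℝ := Ratio μ θ i1 - Ratio μ θ i0 with hr1def
  set rj : ℝ := Ratio μ θ j - Ratio μ θ i0 with hrjdef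
  set cj : ℝ := Ca u a j - Ca u a i0 with hcjdef
  set α : ℝ := (cj - rj) / (r1 * (cj - k * rj)) with hαdef
  set β : ℝ := (1 - k) / (cj - k * rj) with hβdef
  have h := key i0 hi0 i1 hi1 j hj α β
  have hE : (α * (Ratio μ θ i1 - Ratio μ θ i0) + β * (Ratio μ θ j - Ratio μ θ i0)) *
      (α * (Ca u a i1 - Ca u a i0) + β * (Ca u a j - Ca u a i0)) = 1 := by
    rw [hc1, hαdef, hβdef]
    rw [← hr1def, ← hrjdef, ← hcjdef]
    clear_value α β cj rj r1 k
    field_simp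
    have hD2 : -(cj * rj * k * 2) + cj ^ 2 + rj ^ 2 * k ^ 2 ≠ 0 := by
      have h2 := pow_ne_zero 2 hD
      convert h2 using 1; ring
    have hPi := mul_inv_cancel₀ hD2
    linear_combination hPi
  rw [hE] at h
  linarith
end
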